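/- Let I be a finite interval in ℤ containing M integers and x_n ∈ ℂ for n ∈ I. Let S ⊆ ℤ be a finite nonempty set. Then |∑_{n ∈ I} x_n|² ≤ ((M + max S - min S)/|S|²) · ∑_{(s₀,s₁) ∈ S²} ∑_{n ∈ (I - s₀) ∩ (I - s₁)} x_{n+s₀} · conj(x_{n+s₁}), and moreover the right-hand side is a nonnegative real number. -/

import Mathlib

/-- Generalized van der Corput inequality. -/
theorem thm7 (A B : ℤ) (I : Finset ℤ) (hI : I = Finset.Icc A B) (M : ℕ)
    (hM : I.card = M) (x : ℤ → ℂ) (S : Finset ℤ) (hS : S.Nonempty)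
    (T : ℂ)
    (hT : T = ∑ s₀ ∈ S, ∑ s₁ ∈ S,
      ∑ n ∈ (I.image (· - s₀)) ∩ (I.image (· - s₁)),
        x (n + s₀) * starRingEnd ℂ (x (n + s₁))) :
    ‖∑ n ∈ I, x n‖ ^ 2 ≤
        (((M : ℝ) + ((S.max' hS : ℤ) : ℝ) - ((S.min' hS : ℤ) : ℝ)) / (S.card : ℝ) ^ 2) * T.re ∧
      T.im = 0 ∧ 0 ≤ T.re := by
  set a : ℤ := S.min' hS with ha
  set b : ℤ := S.max' hS with hb
  set J : Finset ℤ := Finset.Icc (A - b) (B - a) with hJ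
  set y : ℤ → ℂ := fun n => ∑ s ∈ S, if n + s ∈ I then x (n + s) else 0 with hy
  have hab : a ≤ b := S.min'_le _ (S.max'_mem hS)
  have hmem : ∀ s n : ℤ, n ∈ I.image (· - s) ↔ n + s ∈ I := by
    intro s n
    simp only [Finset.mem_image]
    constructor
    · rintro ⟨m, hm, rfl⟩; simpa using hm
    · intro h; exact ⟨n + s, h, by ring⟩
  have hsub : ∀ s ∈ S, ∀ n : ℤ, n + s ∈ I → n ∈ J := by
    intro s hs n hn
    rw [hI, Finset.mem_Icc] at hn
    have h1 : a ≤ s := S.min'_le s hs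
    have h2 : s ≤ b := S.le_max' s hs
    rw [hJ, Finset.mem_Icc]; omega
  -- key identity : T = ∑ n ∈ J, y n * conj (y n)
  have key : T = ∑ n ∈ J, y n * starRingEnd ℂ (y n) := by
    have expand : ∀ n, y n * starRingEnd ℂ (y n)
        = ∑ s₀ ∈ S, ∑ s₁ ∈ S,
            (if n + s₀ ∈ I then x (n + s₀) else 0) *
              starRingEnd ℂ (if n + s₁ ∈ I then x (n + s₁) else 0) := by
      intro n
      rw [hy]
      simp only [map_sum]
      rw [Finset.sum_mul_sum]
    have step : ∀ s₀ ∈ S, ∀ s₁ ∈ S,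
        (∑ n ∈ (I.image (· - s₀)) ∩ (I.image (· - s₁)),
            x (n + s₀) * starRingEnd ℂ (x (n + s₁)))
          = ∑ n ∈ J, (if n + s₀ ∈ I then x (n + s₀) else 0) *
              starRingEnd ℂ (if n + s₁ ∈ I then x (n + s₁) else 0) := by
      intro s₀ hs₀ s₁ hs₁
      have hset : (I.image (· - s₀)) ∩ (I.image (· - s₁))
          = J.filter (fun n => n + s₀ ∈ I ∧ n + s₁ ∈ I) := by
        ext n
        simp only [Finset.mem_inter, Finset.mem_filter, hmem]
        constructor
        · rintro ⟨h0, h1⟩; exact ⟨hsub s₀ hs₀ n h0, h0, h1⟩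
        · rintro ⟨_, h0, h1⟩; exact ⟨h0, h1⟩
      rw [hset, Finset.sum_filter]
      refine Finset.sum_congr rfl fun n _ => ?_
      by_cases h0 : n + s₀ ∈ I <;> by_cases h1 : n + s₁ ∈ I <;>
        simp [h0, h1]
    rw [hT]
    calc (∑ s₀ ∈ S, ∑ s₁ ∈ S, ∑ n ∈ (I.image (· - s₀)) ∩ (I.image (· - s₁)),
            x (n + s₀) * starRingEnd ℂ (x (n + s₁)))
        = ∑ s₀ ∈ S, ∑ s₁ ∈ S, ∑ n ∈ J,
            (if n + s₀ ∈ I then x (n + s₀) else 0) *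
              starRingEnd ℂ (if n + s₁ ∈ I then x (n + s₁) else 0) :=
          Finset.sum_congr rfl fun s₀ h₀ => Finset.sum_congr rfl fun s₁ h₁ =>
            step s₀ h₀ s₁ h₁
      _ = ∑ s₀ ∈ S, ∑ n ∈ J, ∑ s₁ ∈ S,
            (if n + s₀ ∈ I then x (n + s₀) else 0) *
              starRingEnd ℂ (if n + s₁ ∈ I then x (n + s₁) else 0) :=
          Finset.sum_congr rfl fun s₀ _ => Finset.sum_comm
      _ = ∑ n ∈ J, ∑ s₀ ∈ S, ∑ s₁ ∈ S,
            (if n + s₀ ∈ I then x (n + s₀) else 0) *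
              starRingEnd ℂ (if n + s₁ ∈ I then x (n + s₁) else 0) :=
          Finset.sum_comm
      _ = ∑ n ∈ J, y n * starRingEnd ℂ (y n) :=
          Finset.sum_congr rfl fun n _ => (expand n).symm
  have keyre : T = ((∑ n ∈ J, Complex.normSq (y n) : ℝ) : ℂ) := by
    rw [key]
    push_cast
    exact Finset.sum_congr rfl fun n _ => (Complex.mul_conj (y n))
  have him : T.im = 0 := by rw [keyre]; exact Complex.ofReal_im _
  have hre : T.re = ∑ n ∈ J, Complex.normSq (y n) := by
    rw [keyre]; exact Complex.ofReal_re _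
  have hrepos : 0 ≤ T.re := by
    rw [hre]; exact Finset.sum_nonneg fun n _ => Complex.normSq_nonneg _
  refine ⟨?_, him, hrepos⟩
  -- sum identity
  have hsum : ∑ n ∈ J, y n = (S.card : ℂ) * ∑ n ∈ I, x n := by
    rw [hy, Finset.sum_comm]
    have inner : ∀ s ∈ S, (∑ n ∈ J, if n + s ∈ I then x (n + s) else 0)
        = ∑ m ∈ I, x m := by
      intro s hs
      rw [← Finset.sum_filter]
      exact Finset.sum_nbij' (fun n => n + s) (fun m => m - s)
        (fun n hn => (Finset.mem_filter.mp hn).2)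
        (fun m hm => Finset.mem_filter.mpr ⟨hsub s hs (m - s) (by simpa using hm),
          by simpa using hm⟩)
        (fun n _ => by ring) (fun m _ => by ring) (fun n _ => rfl)
    rw [Finset.sum_congr rfl inner, Finset.sum_const, nsmul_eq_mul]
  -- Cauchy-Schwarz
  have CS : ‖∑ n ∈ J, y n‖ ^ 2 ≤ (J.card : ℝ) * T.re := by
    calc ‖∑ n ∈ J, y n‖ ^ 2
        ≤ (∑ n ∈ J, ‖y n‖) ^ 2 :=
          pow_le_pow_left₀ (norm_nonneg _) (norm_sum_le J y) 2
      _ ≤ (J.card : ℝ) * ∑ n ∈ J, ‖y n‖ ^ 2 :=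
          sq_sum_le_card_mul_sum_sq
      _ = (J.card : ℝ) * T.re := by
          rw [hre]
          congr 1
          exact Finset.sum_congr rfl fun n _ => Complex.sq_norm (y n)
  have hScard : (0:ℝ) < (S.card : ℝ) := by
    exact_mod_cast Finset.card_pos.mpr hS
  have habs : ‖∑ n ∈ J, y n‖
      = (S.card : ℝ) * ‖∑ n ∈ I, x n‖ := by
    rw [hsum, norm_mul, Complex.norm_natCast]
  rcases le_or_gt A B with hAB | hAB
  · -- I nonempty
    have hMZ : (M : ℤ) = B - A + 1 := by
      rw [← hM, hI, Int.card_Icc]; omega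
    have hJZ : (J.card : ℤ) = (M : ℤ) + b - a := by
      rw [hJ, Int.card_Icc]; omega
    have hJcard : (J.card : ℝ) = (M : ℝ) + (b : ℝ) - (a : ℝ) := by
      have := congrArg (Int.cast : ℤ → ℝ) hJZ
      push_cast at this
      exact this
    rw [div_mul_eq_mul_div, le_div_iff₀ (by positivity)]
    calc ‖∑ n ∈ I, x n‖ ^ 2 * (S.card : ℝ) ^ 2
        = ‖∑ n ∈ J, y n‖ ^ 2 := by rw [habs]; ring
      _ ≤ (J.card : ℝ) * T.re := CS
      _ = ((M : ℝ) + (b : ℝ) - (a : ℝ)) * T.re := by rw [hJcard]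
  · -- I empty
    have hIe : I = ∅ := by rw [hI]; exact Finset.Icc_eq_empty (by omega)
    have hM0 : (M:ℝ) = 0 := by rw [← hM, hIe]; simp
    rw [hIe]
    simp only [Finset.sum_empty, map_zero]
    rw [hM0]
    have : (0:ℝ) ≤ ((0 : ℝ) + (b:ℝ) - (a:ℝ)) / (S.card : ℝ) ^ 2 * T.re := by
      have hba : (0:ℝ) ≤ (b:ℝ) - (a:ℝ) := by exact_mod_cast sub_nonneg.mpr hab
      apply mul_nonneg (div_nonneg (by linarith) (by positivity)) hrepos
    simpa using this
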